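/- Let κ̄ ∈ (0,1) and constants b, c ≥ 0, and suppose a nonnegative quantity satisfies the additive drift E[V'|·] ≤ κ̄ V + b + c. Then for any π̃ ∈ (0,1) and any class K∞ functions λ̄ (with λ̄ − id ∈ K∞) and δ̃_f, the additive bound implies the max-form bound: E[V'|·] ≤ max{ κ̃ V, ρ̃(b), γ̃(c) } where κ̃ = 1 − (1 − π̃)(1 − κ̄) ∈ (κ̄, 1), ρ̃ = (id + δ̃_f) ∘ ((1/((1−κ̄)π̃)) · λ̄), and γ̃ = (id + δ̃_f⁻¹) ∘ ((1/((1−κ̄)π̃)) · λ̄ ∘ (λ̄ − id)⁻¹). More precisely: for all V, b, c ≥ 0, κ̄ V + b + c ≤ max{ κ̃ V, (1+δ̃_f)·(1/((1−κ̄)π̃))·λ̄(b), (1+δ̃_f⁻¹)·(1/((1−κ̄)π̃))·λ̄((λ̄−id)⁻¹(c)) } in the sense of composition of the stated K∞ functions. -/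

import Mathlib

/-- A class K∞ function: continuous, strictly increasing, zero at zero, unbounded. -/
def IsKInf (f : NNReal → NNReal) : Prop :=
  Continuous f ∧ StrictMono f ∧ f 0 = 0 ∧ Filter.Tendsto f Filter.atTop Filter.atTop

/-- Additive-to-max conversion of drift bounds (Abdallah et al., Theorem 1):
κ̄ V + b + c ≤ max{κ̃ V, ρ̃(b), γ̃(c)}. -/
theorem additive_to_max_drift
    (κ π : NNReal) (hκ0 : 0 < κ) (hκ1 : κ < 1) (hπ0 : 0 < π) (hπ1 : π < 1)
    (lam δf : NNReal → NNReal) (hlam : IsKInf lam) (hδf : IsKInf δf)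
    (hgt : ∀ s, 0 < s → s < lam s)
    (hlamid : IsKInf (fun s => lam s - s))
    (glam : NNReal → NNReal)
    (hglam : Function.RightInverse glam (fun s => lam s - s))
    (gδf : NNReal → NNReal)
    (hgδf : Function.LeftInverse gδf δf ∧ Function.RightInverse gδf δf) :
    ∀ V b c : NNReal,
      κ * V + b + c ≤
        max (max ((1 - (1 - π) * (1 - κ)) * V)
            ((1 / ((1 - κ) * π)) * lam b + δf ((1 / ((1 - κ) * π)) * lam b)))
          ((1 / ((1 - κ) * π)) * lam (glam c) +
            gδf ((1 / ((1 - κ) * π)) * lam (glam c))) := by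
  intro V b c
  set β : NNReal := (1 - κ) * π with hβ
  have hβpos : 0 < β := mul_pos (tsub_pos_of_lt hκ1) hπ0
  set α : NNReal := 1 / β with hα
  rcases le_or_gt (b + c) (β * V) with h | h
  · -- dominated by the V term
    refine le_trans ?_ (le_max_left _ _)
    refine le_trans ?_ (le_max_left _ _)
    have h1 : (1 - π : NNReal) * (1 - κ) ≤ 1 := by
      calc (1 - π : NNReal) * (1 - κ) ≤ 1 * 1 :=
            mul_le_mul' tsub_le_self tsub_le_self
        _ = 1 := one_mul 1
    have hkey : κ + β = 1 - (1 - π) * (1 - κ) := by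
      apply NNReal.coe_injective
      rw [NNReal.coe_add, NNReal.coe_sub h1, NNReal.coe_mul, NNReal.coe_mul,
        NNReal.coe_sub hπ1.le, NNReal.coe_sub hκ1.le]
      push_cast
      ring
    calc κ * V + b + c = κ * V + (b + c) := by ring
      _ ≤ κ * V + β * V := add_le_add_right h _
      _ = (κ + β) * V := by ring
      _ = (1 - (1 - π) * (1 - κ)) * V := by rw [hkey]
  · -- dominated by the b and c terms
    have hαβ : α * β = 1 := by
      rw [hα, one_div, inv_mul_cancel₀ hβpos.ne']
    have hmain : κ * V + b + c ≤ α * b + α * c := by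
      have hV : V ≤ α * (b + c) := by
        calc V = α * (β * V) := by rw [← mul_assoc, hαβ, one_mul]
          _ ≤ α * (b + c) := mul_le_mul_right h.le _
      have hcoef : κ * α + 1 ≤ α := by
        rw [← NNReal.coe_le_coe, NNReal.coe_add, NNReal.coe_mul, NNReal.coe_one, hα,
          NNReal.coe_div, NNReal.coe_one]
        have hβR : (0:ℝ) < (β:ℝ) := hβpos
        rw [mul_one_div, div_add' _ _ _ hβR.ne', div_le_div_iff₀ hβR hβR]
        have hβ1 : (β:ℝ) ≤ 1 - κ := by
          rw [hβ, NNReal.coe_mul, NNReal.coe_sub hκ1.le]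
          have hπR : (π:ℝ) ≤ 1 := by exact_mod_cast hπ1.le
          have hκR : (κ:ℝ) ≤ 1 := by exact_mod_cast hκ1.le
          push_cast
          nlinarith [NNReal.coe_nonneg π, NNReal.coe_nonneg κ]
        nlinarith [NNReal.coe_nonneg β, NNReal.coe_nonneg κ]
      calc κ * V + b + c = κ * V + (b + c) := by ring
        _ ≤ κ * (α * (b + c)) + (b + c) := add_le_add_left (mul_le_mul_right hV _) _
        _ = (κ * α + 1) * (b + c) := by ring
        _ ≤ α * (b + c) := mul_le_mul_left hcoef _
        _ = α * b + α * c := mul_add _ _ _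
    have hlamge : ∀ s, s ≤ lam s := by
      intro s
      rcases eq_or_lt_of_le (zero_le : (0:NNReal) ≤ s) with hs | hs
      · rw [← hs, hlam.2.2.1]
      · exact (hgt s hs).le
    have hb : α * b ≤ α * lam b := mul_le_mul_right (hlamge b) _
    have hc : α * c ≤ α * lam (glam c) := by
      refine mul_le_mul_right ?_ _
      have := hglam c
      simp only at this
      calc c = lam (glam c) - glam c := this.symm
        _ ≤ lam (glam c) := tsub_le_self
    set x : NNReal := α * lam b with hx
    set y : NNReal := α * lam (glam c) with hy
    have hxy : κ * V + b + c ≤ x + y := hmain.trans (add_le_add hb hc)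
    rcases le_or_gt y (δf x) with h2 | h2
    · refine hxy.trans (le_trans ?_ ((le_max_right _ _).trans (le_max_left _ _)))
      exact add_le_add_right h2 _
    · refine hxy.trans (le_trans ?_ (le_max_right _ _))
      have hmono : x ≤ gδf y := by
        have hx' : x = gδf (δf x) := (hgδf.1 x).symm
        rw [hx']
        have : δf (gδf (δf x)) ≤ δf (gδf y) := by
          rw [hgδf.2 (δf x), hgδf.2 y]
          exact ((hgδf.1 x) ▸ h2.le : δf x ≤ y)
        exact hδf.2.1.le_iff_le.mp this
      calc x + y ≤ gδf y + y := add_le_add_left hmono _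
        _ = y + gδf y := add_comm _ _
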